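/- Assume λ > I. Let u, v : ℝⁿ → ℝ be measurable, square-integrable functions with u = 0 and v = 0 almost everywhere on ℝⁿ∖Ω. Then ∬_{{(x,y) : x ∈ Ω_I, y ∈ Ω∪Ω_I, |y−x| ≥ λ}} |u(y)·v(y)|/|y−x|^{n+2s} dy dx ≤ (n·ωₙ/(2·s·(λ−I)^{2s}))·‖u‖_{L²(Ω)}·‖v‖_{L²(Ω)}. -/

import Mathlib

open MeasureTheory Real Set
open scoped ENNReal

noncomputable section

abbrev Eucl (n : ℕ) := EuclideanSpace ℝ (Fin n)

/-- `ωₙ`, the Lebesgue measure of the unit ball of `ℝⁿ`. -/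
def unitBallVol (n : ℕ) : ℝ := (volume (Metric.ball (0 : Eucl n) 1)).toReal

/-- The interaction domain `Ω_I = {y ∈ ℝⁿ∖Ω : |y−x| < λ for some x ∈ Ω}`. -/
def interDom {n : ℕ} (Ω : Set (Eucl n)) (lam : ℝ) : Set (Eucl n) :=
  {y | y ∉ Ω ∧ ∃ x ∈ Ω, ‖y - x‖ < lam}

/-- The `L²(Ω)` norm. -/
def L2NormOn {n : ℕ} (Ω : Set (Eucl n)) (v : Eucl n → ℝ) : ℝ :=
  Real.sqrt (∫ x in Ω, v x ^ 2)

lemma radial_aux (n : ℕ) (hn : 1 ≤ n) (s lam : ℝ) (hs : 0 < s) (hlam : 0 < lam) :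
    ∫ z : Eucl n, (Ici lam).indicator (fun t : ℝ => t ^ (-((n : ℝ) + 2 * s))) ‖z‖ ∂volume
      = (n : ℝ) * unitBallVol n * (lam ^ (-(2 * s)) / (2 * s)) := by
  set r : ℝ := (n : ℝ) + 2 * s with hr
  have hdim : Module.finrank ℝ (Eucl n) = n := by
    simp [finrank_euclideanSpace]
  haveI : Nontrivial (Eucl n) := Module.nontrivial_of_finrank_pos (R := ℝ) (by omega)
  rw [integral_fun_norm_addHaar (volume : Measure (Eucl n))
    ((Ici lam).indicator (fun t : ℝ => t ^ (-r)))]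
  rw [hdim]
  have h1 : ∀ y : ℝ, y ^ (n - 1) • (Ici lam).indicator (fun t : ℝ => t ^ (-r)) y
      = (Ici lam).indicator (fun t : ℝ => t ^ (n - 1) * t ^ (-r)) y := by
    intro y
    by_cases hy : y ∈ Ici lam <;> simp [hy]
  have h2 : Ioi (0:ℝ) ∩ Ici lam = Ici lam :=
    Set.inter_eq_self_of_subset_right (fun y hy => lt_of_lt_of_le hlam hy)
  have h3 : ∫ y in Ioi (0:ℝ), y ^ (n - 1) • (Ici lam).indicator (fun t : ℝ => t ^ (-r)) y
      = ∫ y in Ioi lam, y ^ (-1 - 2*s) := by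
    simp_rw [h1]
    rw [setIntegral_indicator measurableSet_Ici, h2, ← integral_Ici_eq_integral_Ioi]
    refine setIntegral_congr_fun measurableSet_Ici (fun y hy => ?_)
    have hy0 : 0 < y := lt_of_lt_of_le hlam hy
    have : (y : ℝ) ^ (n - 1) = y ^ ((n : ℝ) - 1) := by
      rw [← Real.rpow_natCast y (n-1), Nat.cast_sub hn, Nat.cast_one]
    rw [this, ← Real.rpow_add hy0]
    congr 1
    rw [hr]; ring
  rw [h3, integral_Ioi_rpow_of_lt (by linarith) hlam]
  have h4 : (-1 - 2*s) + 1 = -(2*s) := by ring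
  rw [h4, unitBallVol]
  rw [nsmul_eq_mul, smul_eq_mul]
  rw [div_neg, neg_div, neg_neg]
  rw [measureReal_def]
  ring

lemma radial_integrable (n : ℕ) (hn : 1 ≤ n) (s lam : ℝ) (hs : 0 < s) (hs1 : s < 1)
    (hlam : 0 < lam) :
    Integrable (fun z : Eucl n =>
      (Ici lam).indicator (fun t : ℝ => t ^ (-((n : ℝ) + 2 * s))) ‖z‖) volume := by
  set r : ℝ := (n : ℝ) + 2 * s with hr
  have hrpos : 0 < r := by positivity
  have hnr : (Module.finrank ℝ (Eucl n) : ℝ) < r := by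
    simp only [finrank_euclideanSpace, Fintype.card_fin, hr]
    linarith
  set c : ℝ := (1 + lam⁻¹) ^ r with hc
  have hcpos : 0 < c := by positivity
  refine Integrable.mono' ((integrable_one_add_norm hnr).const_mul c) ?_ (ae_of_all _ fun z => ?_)
  · exact ((Measurable.indicator (by fun_prop) measurableSet_Ici).comp
      measurable_norm).aestronglyMeasurable
  · by_cases hz : ‖z‖ ∈ Ici lam
    · have hz0 : 0 < ‖z‖ := lt_of_lt_of_le hlam hz
      simp only [indicator_of_mem hz]
      rw [Real.norm_eq_abs, abs_of_nonneg (Real.rpow_nonneg (norm_nonneg z) _)]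
      have hB : (0:ℝ) < (1 + ‖z‖) ^ r := by positivity
      have hA : (0:ℝ) < ‖z‖ ^ r := Real.rpow_pos_of_pos hz0 _
      have hAB : (1 + ‖z‖) ^ r ≤ c * ‖z‖ ^ r := by
        rw [hc, ← Real.mul_rpow (by positivity) (norm_nonneg z)]
        refine Real.rpow_le_rpow (by positivity) ?_ hrpos.le
        have : (1:ℝ) ≤ lam⁻¹ * ‖z‖ := by
          rw [← div_eq_inv_mul, le_div_iff₀ hlam]; simpa using hz
        nlinarith [norm_nonneg z]
      rw [Real.rpow_neg (norm_nonneg z), Real.rpow_neg (by positivity : (0:ℝ) ≤ 1 + ‖z‖),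
        ← one_div, mul_comm c, inv_mul_eq_div, div_le_div_iff₀ hA hB]
      linarith
    · simp only [indicator_of_notMem hz, norm_zero]
      positivity

lemma cs_aux {α : Type*} [MeasurableSpace α] (μ : Measure α) (u v : α → ℝ)
    (hu : Measurable u) (hv : Measurable v) :
    ∫⁻ y, ENNReal.ofReal |u y * v y| ∂μ ≤
      (∫⁻ y, ENNReal.ofReal (u y ^ 2) ∂μ) ^ (1/2 : ℝ) *
      (∫⁻ y, ENNReal.ofReal (v y ^ 2) ∂μ) ^ (1/2 : ℝ) := by
  have hpq : Real.HolderConjugate 2 2 := Real.HolderConjugate.two_two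
  have h2 : ∀ w : α → ℝ, ∀ y, (ENNReal.ofReal |w y|) ^ (2:ℝ) = ENNReal.ofReal (w y ^ 2) := by
    intro w y
    rw [ENNReal.ofReal_rpow_of_nonneg (abs_nonneg _) (by norm_num)]
    congr 1
    rw [show (2:ℝ) = ((2:ℕ):ℝ) by norm_num, Real.rpow_natCast, sq_abs]
  calc ∫⁻ y, ENNReal.ofReal |u y * v y| ∂μ
      = ∫⁻ y, ((fun y => ENNReal.ofReal |u y|) * (fun y => ENNReal.ofReal |v y|)) y ∂μ := by
        congr 1; ext y
        simp [abs_mul, ENNReal.ofReal_mul (abs_nonneg (u y))]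
    _ ≤ (∫⁻ y, (ENNReal.ofReal |u y|) ^ (2:ℝ) ∂μ) ^ (1/2 : ℝ) *
        (∫⁻ y, (ENNReal.ofReal |v y|) ^ (2:ℝ) ∂μ) ^ (1/2 : ℝ) :=
      ENNReal.lintegral_mul_le_Lp_mul_Lq μ hpq
        (hu.abs.ennreal_ofReal.aemeasurable) (hv.abs.ennreal_ofReal.aemeasurable)
    _ = _ := by simp_rw [h2]

/-- Assume `λ > I = diam Ω`. For measurable, square-integrable
`u, v : ℝⁿ → ℝ` vanishing a.e. off `Ω`,
`∬_{{(x,y) : x ∈ Ω_I, y ∈ Ω∪Ω_I, |y−x| ≥ λ}} |u(y)·v(y)|/|y−x|^{n+2s} dy dx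
  ≤ (n·ωₙ/(2·s·(λ−I)^{2s}))·‖u‖_{L²(Ω)}·‖v‖_{L²(Ω)}`. -/
theorem stmt6 (n : ℕ) (hn : 1 ≤ n) (s : ℝ) (hs : s ∈ Set.Ioo (0 : ℝ) 1)
    (Ω : Set (Eucl n)) (hΩne : Ω.Nonempty) (hΩo : IsOpen Ω) (hΩb : Bornology.IsBounded Ω)
    (lam : ℝ) (hlam : Metric.diam Ω < lam)
    (u v : Eucl n → ℝ) (hu : Measurable u) (hv : Measurable v)
    (hu2 : Integrable (fun x => u x ^ 2)) (hv2 : Integrable (fun x => v x ^ 2))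
    (hu0 : ∀ᵐ x ∂volume, x ∉ Ω → u x = 0) (hv0 : ∀ᵐ x ∂volume, x ∉ Ω → v x = 0) :
    ∫ p in {p : Eucl n × Eucl n |
        p.1 ∈ interDom Ω lam ∧ p.2 ∈ Ω ∪ interDom Ω lam ∧ lam ≤ ‖p.2 - p.1‖},
        |u p.2 * v p.2| / ‖p.2 - p.1‖ ^ ((n : ℝ) + 2 * s) ≤
      (n : ℝ) * unitBallVol n / (2 * s * (lam - Metric.diam Ω) ^ (2 * s)) *
        L2NormOn Ω u * L2NormOn Ω v := by
  obtain ⟨hs0, hs1⟩ := hs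
  have hI0 : 0 ≤ Metric.diam Ω := Metric.diam_nonneg
  have hlam0 : 0 < lam := lt_of_le_of_lt hI0 hlam
  set r : ℝ := (n : ℝ) + 2 * s with hr
  set A : Set (Eucl n) := {z : Eucl n | lam ≤ ‖z‖} with hA
  have hAm : MeasurableSet A := measurable_norm measurableSet_Ici
  set g : Eucl n → ℝ≥0∞ := fun z => A.indicator (fun z => ENNReal.ofReal (‖z‖ ^ (-r))) z with hgdef
  have hg : Measurable g := Measurable.indicator (by fun_prop) hAm
  set K : ℝ≥0∞ := ∫⁻ z, g z ∂volume with hK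
  have hφ : ∀ z : Eucl n,
      g z = ENNReal.ofReal ((Ici lam).indicator (fun t : ℝ => t ^ (-r)) ‖z‖) := by
    intro z; by_cases hz : lam ≤ ‖z‖ <;> simp [hgdef, hA, indicator, hz]
  have hKval : K = ENNReal.ofReal ((n : ℝ) * unitBallVol n * (lam ^ (-(2*s)) / (2*s))) := by
    rw [hK]
    simp_rw [hφ]
    rw [← ofReal_integral_eq_lintegral_ofReal (radial_integrable n hn s lam hs0 hs1 hlam0)
      (ae_of_all _ fun z => indicator_nonneg (fun t ht => Real.rpow_nonneg
        (le_trans hlam0.le ht) _) _)]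
    rw [radial_aux n hn s lam hs0 hlam0]
  set D : ℝ := (n : ℝ) * unitBallVol n / (2 * s * (lam - Metric.diam Ω) ^ (2 * s)) with hD
  have hnω : 0 ≤ (n : ℝ) * unitBallVol n :=
    mul_nonneg (Nat.cast_nonneg n) ENNReal.toReal_nonneg
  have hlamI : 0 < lam - Metric.diam Ω := by linarith
  have hden2 : (0:ℝ) < (lam - Metric.diam Ω) ^ (2*s) := Real.rpow_pos_of_pos hlamI _
  have hD0 : 0 ≤ D := by
    apply div_nonneg hnω
    positivity
  have hKle : K ≤ ENNReal.ofReal D := by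
    rw [hKval]
    apply ENNReal.ofReal_le_ofReal
    have h1 : (lam - Metric.diam Ω) ^ (2*s) ≤ lam ^ (2*s) :=
      Real.rpow_le_rpow hlamI.le (by linarith) (by positivity)
    have heq1 : (n : ℝ) * unitBallVol n * (lam ^ (-(2*s)) / (2*s))
        = (n : ℝ) * unitBallVol n / (2 * s * lam ^ (2*s)) := by
      rw [Real.rpow_neg hlam0.le, div_eq_mul_inv, div_eq_mul_inv, mul_inv]
      ring
    rw [heq1, hD]
    gcongr
  -- the integrand and sets
  set F : Eucl n × Eucl n → ℝ := fun p => |u p.2 * v p.2| / ‖p.2 - p.1‖ ^ r with hF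
  set T : Set (Eucl n × Eucl n) := {p | lam ≤ ‖p.2 - p.1‖} with hT
  have hTm : MeasurableSet T := (measurable_snd.sub measurable_fst).norm measurableSet_Ici
  set S : Set (Eucl n × Eucl n) := {p : Eucl n × Eucl n |
      p.1 ∈ interDom Ω lam ∧ p.2 ∈ Ω ∪ interDom Ω lam ∧ lam ≤ ‖p.2 - p.1‖} with hS
  have hST : S ⊆ T := fun p hp => hp.2.2
  have hFm : Measurable F := by
    apply Measurable.div
    · exact ((hu.comp measurable_snd).mul (hv.comp measurable_snd)).abs
    · fun_prop
  have hF0 : ∀ p, 0 ≤ F p := by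
    intro p
    apply div_nonneg (abs_nonneg _) (Real.rpow_nonneg (norm_nonneg _) _)
  set c : Eucl n → ℝ≥0∞ := fun y => ENNReal.ofReal |u y * v y| with hc
  have hcm : Measurable c := (hu.mul hv).abs.ennreal_ofReal
  set H : Eucl n × Eucl n → ℝ≥0∞ := fun p => c p.2 * g (p.2 - p.1) with hH
  have hHm : Measurable H :=
    (hcm.comp measurable_snd).mul (hg.comp (measurable_snd.sub measurable_fst))
  have heq : ∀ p ∈ T, ENNReal.ofReal (F p) = H p := by
    intro p hp
    have hp' : (p.2 - p.1) ∈ A := hp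
    simp only [hH, hc, hgdef, hF]
    rw [indicator_of_mem hp', ← ENNReal.ofReal_mul (abs_nonneg _)]
    congr 1
    rw [Real.rpow_neg (norm_nonneg _), div_eq_mul_inv]
  have step1 : (∫⁻ p in S, ENNReal.ofReal (F p)) ≤ ∫⁻ p, H p := by
    calc ∫⁻ p in S, ENNReal.ofReal (F p) ≤ ∫⁻ p in T, ENNReal.ofReal (F p) :=
          lintegral_mono_set hST
      _ = ∫⁻ p in T, H p := setLIntegral_congr_fun hTm heq
      _ ≤ ∫⁻ p, H p := setLIntegral_le_lintegral _ _
  have step2 : ∫⁻ p, H p = (∫⁻ y, c y) * K := by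
    rw [MeasureTheory.Measure.volume_eq_prod, lintegral_prod_symm _ hHm.aemeasurable]
    have inner : ∀ y : Eucl n, (∫⁻ x, H (x, y)) = c y * K := by
      intro y
      simp only [hH]
      have hgy : Measurable fun x : Eucl n => g (y - x) :=
        hg.comp (measurable_const.sub measurable_id)
      rw [lintegral_const_mul _ hgy]
      congr 1
      exact (Measure.measurePreserving_sub_left volume y).lintegral_comp hg
    simp_rw [inner]
    rw [lintegral_mul_const _ hcm]
  have hintU : ∫⁻ y, ENNReal.ofReal (u y ^ 2) = ENNReal.ofReal (∫ x in Ω, u x ^ 2) := by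
    rw [← ofReal_integral_eq_lintegral_ofReal hu2 (ae_of_all _ fun x => sq_nonneg _)]
    congr 1
    have h : (fun x => u x ^ 2) =ᵐ[volume] Ω.indicator (fun x => u x ^ 2) := by
      filter_upwards [hu0] with x hx
      by_cases hmem : x ∈ Ω
      · simp [hmem]
      · simp [hmem, hx hmem]
    rw [integral_congr_ae h, integral_indicator hΩo.measurableSet]
  have hintV : ∫⁻ y, ENNReal.ofReal (v y ^ 2) = ENNReal.ofReal (∫ x in Ω, v x ^ 2) := by
    rw [← ofReal_integral_eq_lintegral_ofReal hv2 (ae_of_all _ fun x => sq_nonneg _)]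
    congr 1
    have h : (fun x => v x ^ 2) =ᵐ[volume] Ω.indicator (fun x => v x ^ 2) := by
      filter_upwards [hv0] with x hx
      by_cases hmem : x ∈ Ω
      · simp [hmem]
      · simp [hmem, hx hmem]
    rw [integral_congr_ae h, integral_indicator hΩo.measurableSet]
  have hau : 0 ≤ ∫ x in Ω, u x ^ 2 := integral_nonneg fun x => sq_nonneg _
  have hav : 0 ≤ ∫ x in Ω, v x ^ 2 := integral_nonneg fun x => sq_nonneg _
  have step3 : (∫⁻ y, c y) ≤ ENNReal.ofReal (L2NormOn Ω u) * ENNReal.ofReal (L2NormOn Ω v) := by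
    calc (∫⁻ y, c y) ≤ (∫⁻ y, ENNReal.ofReal (u y ^ 2)) ^ (1/2 : ℝ) *
        (∫⁻ y, ENNReal.ofReal (v y ^ 2)) ^ (1/2 : ℝ) := cs_aux volume u v hu hv
      _ = _ := by
        rw [hintU, hintV, L2NormOn, L2NormOn, Real.sqrt_eq_rpow, Real.sqrt_eq_rpow,
          ← ENNReal.ofReal_rpow_of_nonneg hau (by norm_num),
          ← ENNReal.ofReal_rpow_of_nonneg hav (by norm_num)]
  have hRHS0 : 0 ≤ D * L2NormOn Ω u * L2NormOn Ω v :=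
    mul_nonneg (mul_nonneg hD0 (Real.sqrt_nonneg _)) (Real.sqrt_nonneg _)
  rw [integral_eq_lintegral_of_nonneg_ae (ae_of_all _ hF0) hFm.aestronglyMeasurable.restrict]
  apply ENNReal.toReal_le_of_le_ofReal hRHS0
  calc (∫⁻ p in S, ENNReal.ofReal (F p)) ≤ ∫⁻ p, H p := step1
    _ = (∫⁻ y, c y) * K := step2
    _ ≤ (ENNReal.ofReal (L2NormOn Ω u) * ENNReal.ofReal (L2NormOn Ω v)) * ENNReal.ofReal D :=
        mul_le_mul' step3 hKle
    _ = ENNReal.ofReal (D * L2NormOn Ω u * L2NormOn Ω v) := by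
        have hL2u : 0 ≤ L2NormOn Ω u := Real.sqrt_nonneg _
        have hL2v : 0 ≤ L2NormOn Ω v := Real.sqrt_nonneg _
        rw [← ENNReal.ofReal_mul hL2u, ← ENNReal.ofReal_mul (mul_nonneg hL2u hL2v)]
        congr 1
        ring
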